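/- Fix θ ∈ ℝ with θ/π irrational, and let Dic∞ be the subgroup of the unitary group U(2,ℂ) generated by x = !![0,-1;1,0] and a = !![exp(iθ),0;0,exp(-iθ)]. Then the topological closure of Dic∞ in U(2,ℂ) equals the subgroup of U(2,ℂ) generated by x together with all matrices !![exp(it),0;0,exp(-it)] for t ∈ ℝ. -/

import Mathlib

open Matrix

/-- Fix `θ ∈ ℝ` with `θ/π` irrational, and let `Dic∞` be the subgroup of the unitary group
`U(2,ℂ)` generated by `x = !![0,-1;1,0]` and `a = !![exp(iθ),0;0,exp(-iθ)]`.  Then the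
topological closure of `Dic∞` in `U(2,ℂ)` equals the subgroup of `U(2,ℂ)` generated by `x`
together with all matrices `!![exp(it),0;0,exp(-it)]` for `t ∈ ℝ`. -/
theorem closure_dicyclicInf_unitary
    (θ : ℝ) (hθ : Irrational (θ / Real.pi))
    (X A : Matrix.unitaryGroup (Fin 2) ℂ)
    (hX : (X : Matrix (Fin 2) (Fin 2) ℂ) = !![0, -1; 1, 0])
    (hA : (A : Matrix (Fin 2) (Fin 2) ℂ) =
      !![Complex.exp (θ * Complex.I), 0; 0, Complex.exp (-(θ * Complex.I))])
    (D : ℝ → Matrix.unitaryGroup (Fin 2) ℂ)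
    (hD : ∀ t : ℝ, (D t : Matrix (Fin 2) (Fin 2) ℂ) =
      !![Complex.exp (t * Complex.I), 0; 0, Complex.exp (-(t * Complex.I))]) :
    closure ((Subgroup.closure {X, A} : Subgroup (Matrix.unitaryGroup (Fin 2) ℂ)) :
        Set (Matrix.unitaryGroup (Fin 2) ℂ)) =
      ((Subgroup.closure ({X} ∪ Set.range D) : Subgroup (Matrix.unitaryGroup (Fin 2) ℂ)) :
        Set (Matrix.unitaryGroup (Fin 2) ℂ)) := by
  classical
  have hπ : (0 : ℝ) < Real.pi := Real.pi_pos
  have hmul : ∀ P Q : Matrix.unitaryGroup (Fin 2) ℂ,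
      ((P * Q : Matrix.unitaryGroup (Fin 2) ℂ) : Matrix (Fin 2) (Fin 2) ℂ) = P.1 * Q.1 :=
    fun _ _ => rfl
  -- basic relations
  have hDadd : ∀ s t : ℝ, D s * D t = D (s + t) := by
    intro s t
    apply Subtype.ext
    have h1 : Complex.exp (s * Complex.I) * Complex.exp (t * Complex.I)
        = Complex.exp (((s + t : ℝ)) * Complex.I) := by
      rw [← Complex.exp_add]; congr 1; push_cast; ring
    have h2 : Complex.exp (-(s * Complex.I)) * Complex.exp (-(t * Complex.I))
        = Complex.exp (-(((s + t : ℝ)) * Complex.I)) := by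
      rw [← Complex.exp_add]; congr 1; push_cast; ring
    rw [hmul, hD, hD, hD, Matrix.mul_fin_two]
    simp [h1, h2]
  have hD0 : D 0 = 1 := by
    apply Subtype.ext
    rw [hD]
    norm_num
    exact Matrix.one_fin_two.symm
  have hDinv : ∀ t : ℝ, (D t)⁻¹ = D (-t) := by
    intro t
    refine inv_eq_of_mul_eq_one_right ?_
    rw [hDadd, add_neg_cancel, hD0]
  have hD2pi : D (2 * Real.pi) = 1 := by
    apply Subtype.ext
    rw [hD]
    have : ((2 * Real.pi : ℝ) : ℂ) * Complex.I = 2 * Real.pi * Complex.I := by push_cast; ring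
    rw [this, Complex.exp_two_pi_mul_I, ← this, Complex.exp_neg, this,
      Complex.exp_two_pi_mul_I]
    norm_num
    exact Matrix.one_fin_two.symm
  have hXX : X * X = D Real.pi := by
    apply Subtype.ext
    rw [hmul, hX, hD, Matrix.mul_fin_two, Complex.exp_pi_mul_I, Complex.exp_neg,
      Complex.exp_pi_mul_I]
    norm_num
  have hDX : ∀ t : ℝ, D t * X = X * D (-t) := by
    intro t
    apply Subtype.ext
    rw [hmul, hmul, hX, hD, hD, Matrix.mul_fin_two, Matrix.mul_fin_two]
    norm_num
  have hXinv : X⁻¹ = X * D (-Real.pi) := by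
    refine inv_eq_of_mul_eq_one_right ?_
    rw [← mul_assoc, hXX, hDadd, add_neg_cancel, hD0]
  have hAD : A = D θ := Subtype.ext (hA.trans (hD θ).symm)
  -- the candidate closed subgroup
  set S : Set (Matrix.unitaryGroup (Fin 2) ℂ) :=
    Set.range D ∪ (fun t => X * D t) '' Set.univ with hS
  have hmemS : ∀ g, g ∈ S ↔ (∃ t, D t = g) ∨ (∃ t, X * D t = g) := by
    intro g
    simp [hS, Set.mem_union, Set.mem_range, Set.image_univ]
  have hK : ∃ K : Subgroup (Matrix.unitaryGroup (Fin 2) ℂ), (K : Set _) = S := by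
    refine ⟨{ carrier := S, mul_mem' := ?_, one_mem' := ?_, inv_mem' := ?_ }, rfl⟩
    · rintro a b ha hb
      rcases (hmemS a).1 ha with ⟨s, rfl⟩ | ⟨s, rfl⟩ <;>
        rcases (hmemS b).1 hb with ⟨t, rfl⟩ | ⟨t, rfl⟩
      · exact (hmemS _).2 (Or.inl ⟨s + t, (hDadd s t).symm⟩)
      · refine (hmemS _).2 (Or.inr ⟨-s + t, ?_⟩)
        rw [← mul_assoc, hDX s, mul_assoc, hDadd]
      · refine (hmemS _).2 (Or.inr ⟨s + t, ?_⟩)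
        rw [mul_assoc, hDadd]
      · refine (hmemS _).2 (Or.inl ⟨Real.pi + -s + t, ?_⟩)
        rw [← mul_assoc (X * D s) X (D t), mul_assoc X (D s) X, hDX s,
          ← mul_assoc X X (D (-s)), hXX, hDadd, hDadd]
    · exact (hmemS 1).2 (Or.inl ⟨0, hD0⟩)
    · rintro a ha
      rcases (hmemS a).1 ha with ⟨t, rfl⟩ | ⟨t, rfl⟩
      · exact (hmemS _).2 (Or.inl ⟨-t, (hDinv t).symm⟩)
      · refine (hmemS _).2 (Or.inr ⟨t + -Real.pi, ?_⟩)
        rw [_root_.mul_inv_rev, hDinv, hXinv, ← mul_assoc, hDX, neg_neg, mul_assoc, hDadd]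
  obtain ⟨K, hKS⟩ := hK
  -- D is continuous
  have hcont : Continuous D := by
    rw [continuous_induced_rng]
    have : (Subtype.val ∘ D) = fun t : ℝ =>
        !![Complex.exp (t * Complex.I), 0; 0, Complex.exp (-(t * Complex.I))] := by
      funext t; exact hD t
    rw [this]
    refine continuous_matrix fun i j => ?_
    fin_cases i <;> fin_cases j <;> simp <;> fun_prop
  -- S is compact, hence closed
  have hper : Function.Periodic D (2 * Real.pi) := by
    intro t
    rw [← hDadd, hD2pi, mul_one]
  have hrange : Set.range D = D '' Set.Icc 0 (0 + 2 * Real.pi) :=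
    (hper.image_Icc (by positivity) 0).symm
  have hcomp : IsCompact S := by
    rw [hS, Set.image_univ, hrange]
    have h1 : IsCompact (D '' Set.Icc 0 (0 + 2 * Real.pi)) :=
      (isCompact_Icc).image hcont
    refine h1.union ?_
    have : (fun t => X * D t) '' Set.Icc 0 (0 + 2 * Real.pi) =
        (fun g => X * g) '' (D '' Set.Icc 0 (0 + 2 * Real.pi)) := by
      rw [← Set.image_comp]; rfl
    have h2 := h1.image (continuous_mul_left X)
    have hr : Set.range (fun t => X * D t) =
        (fun g => X * g) '' Set.range D := by
      rw [← Set.range_comp]; rfl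
    rw [Set.image_univ] at *
    rw [hr, hrange]
    exact h2
  have hclosed : IsClosed S := hcomp.isClosed
  -- density of the subgroup ℤθ + 2πℤ in ℝ
  have hdense : Dense ((AddSubgroup.closure {θ, 2 * Real.pi} : AddSubgroup ℝ) : Set ℝ) := by
    rcases (AddSubgroup.closure {θ, 2 * Real.pi} : AddSubgroup ℝ).dense_or_cyclic with h | ⟨a, ha⟩
    · exact h
    · exfalso
      have hθmem : θ ∈ AddSubgroup.closure ({θ, 2 * Real.pi} : Set ℝ) :=
        AddSubgroup.subset_closure (by simp)
      have h2πmem : (2 * Real.pi) ∈ AddSubgroup.closure ({θ, 2 * Real.pi} : Set ℝ) :=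
        AddSubgroup.subset_closure (by simp)
      rw [ha, AddSubgroup.mem_closure_singleton] at hθmem h2πmem
      obtain ⟨n, hn⟩ := hθmem
      obtain ⟨m, hm⟩ := h2πmem
      have hm0 : (m : ℝ) * a ≠ 0 := by
        rw [show (m : ℝ) * a = (2 : ℝ) * Real.pi by rw [← hm, zsmul_eq_mul]]
        positivity
      have hmne : (m : ℝ) ≠ 0 := fun h => hm0 (by rw [h, zero_mul])
      apply hθ
      refine ⟨(2 * n : ℚ) / (m : ℚ), ?_⟩
      have hπa : Real.pi = (m : ℝ) * a / 2 := by
        rw [show (m : ℝ) * a = (2 : ℝ) * Real.pi by rw [← hm, zsmul_eq_mul]]; ring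
      have hθa : θ = (n : ℝ) * a := by rw [← hn, zsmul_eq_mul]
      have hane : a ≠ 0 := by
        intro h; rw [h, mul_zero] at hm0; exact hm0 rfl
      rw [hθa, hπa]
      push_cast
      field_simp
  -- each D t lies in the closure of the dicyclic group
  have H := (Subgroup.closure {X, A} : Subgroup (Matrix.unitaryGroup (Fin 2) ℂ))
  have hDmemH : ∀ s ∈ (AddSubgroup.closure ({θ, 2 * Real.pi} : Set ℝ) : Set ℝ),
      D s ∈ Subgroup.closure ({X, A} : Set (Matrix.unitaryGroup (Fin 2) ℂ)) := by
    intro s hs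
    induction hs using AddSubgroup.closure_induction with
    | mem x hx =>
      rcases hx with rfl | rfl
      · rw [← hAD]; exact Subgroup.subset_closure (by simp)
      · rw [hD2pi]; exact one_mem _
    | zero => rw [hD0]; exact one_mem _
    | add x y _ _ hx hy => rw [← hDadd]; exact mul_mem hx hy
    | neg x _ hx => rw [← hDinv]; exact inv_mem hx
  have hDtcl : ∀ t : ℝ, D t ∈
      closure ((Subgroup.closure {X, A} : Subgroup (Matrix.unitaryGroup (Fin 2) ℂ)) :
        Set (Matrix.unitaryGroup (Fin 2) ℂ)) := by
    intro t
    have ht : t ∈ closure ((AddSubgroup.closure ({θ, 2 * Real.pi} : Set ℝ)) : Set ℝ) :=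
      hdense t
    exact map_mem_closure hcont ht hDmemH
  -- the two inclusions
  apply le_antisymm
  · -- closure ⊆ the big subgroup, since the latter is closed and contains the generators
    have hsub : ((Subgroup.closure {X, A} : Subgroup (Matrix.unitaryGroup (Fin 2) ℂ)) :
        Set (Matrix.unitaryGroup (Fin 2) ℂ)) ⊆
        ((Subgroup.closure ({X} ∪ Set.range D) : Subgroup (Matrix.unitaryGroup (Fin 2) ℂ)) :
          Set (Matrix.unitaryGroup (Fin 2) ℂ)) := by
      apply Subgroup.closure_le (Subgroup.closure ({X} ∪ Set.range D)) |>.2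
      rintro g (rfl | rfl)
      · exact Subgroup.subset_closure (Or.inl rfl)
      · rw [hAD]; exact Subgroup.subset_closure (Or.inr ⟨θ, rfl⟩)
    have hGclosed : IsClosed
        ((Subgroup.closure ({X} ∪ Set.range D) : Subgroup (Matrix.unitaryGroup (Fin 2) ℂ)) :
          Set (Matrix.unitaryGroup (Fin 2) ℂ)) := by
      have : (Subgroup.closure ({X} ∪ Set.range D) : Subgroup (Matrix.unitaryGroup (Fin 2) ℂ))
          = K := by
        apply le_antisymm
        · apply (Subgroup.closure_le K).2
          rintro g (rfl | ⟨t, rfl⟩)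
          · show g ∈ (K : Set _)
            rw [hKS]
            refine (hmemS _).2 (Or.inr ⟨0, ?_⟩)
            rw [hD0, mul_one]
          · show D t ∈ (K : Set _)
            rw [hKS]
            exact (hmemS _).2 (Or.inl ⟨t, rfl⟩)
        · intro g hg
          have : g ∈ (K : Set _) := hg
          rw [hKS] at this
          rcases (hmemS g).1 this with ⟨t, rfl⟩ | ⟨t, rfl⟩
          · exact Subgroup.subset_closure (Or.inr ⟨t, rfl⟩)
          · exact mul_mem (Subgroup.subset_closure (Or.inl rfl))
              (Subgroup.subset_closure (Or.inr ⟨t, rfl⟩))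
      rw [this, hKS]
      exact hclosed
    exact closure_minimal hsub hGclosed
  · -- the big subgroup is contained in the closure
    have hmulX : Continuous (fun g : Matrix.unitaryGroup (Fin 2) ℂ => X * g) :=
      continuous_mul_left X
    have hGK : (Subgroup.closure ({X} ∪ Set.range D) :
        Subgroup (Matrix.unitaryGroup (Fin 2) ℂ)) = K := by
      apply le_antisymm
      · apply (Subgroup.closure_le K).2
        rintro g (rfl | ⟨t, rfl⟩)
        · show g ∈ (K : Set _)
          rw [hKS]
          refine (hmemS _).2 (Or.inr ⟨0, ?_⟩)
          rw [hD0, mul_one]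
        · show D t ∈ (K : Set _)
          rw [hKS]
          exact (hmemS _).2 (Or.inl ⟨t, rfl⟩)
      · intro g hg
        have : g ∈ (K : Set _) := hg
        rw [hKS] at this
        rcases (hmemS g).1 this with ⟨t, rfl⟩ | ⟨t, rfl⟩
        · exact Subgroup.subset_closure (Or.inr ⟨t, rfl⟩)
        · exact mul_mem (Subgroup.subset_closure (Or.inl rfl))
            (Subgroup.subset_closure (Or.inr ⟨t, rfl⟩))
    rw [hGK]
    intro g hg
    have hg' : g ∈ S := by rw [← hKS]; exact hg
    rcases (hmemS g).1 hg' with ⟨t, rfl⟩ | ⟨t, rfl⟩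
    · exact hDtcl t
    · exact map_mem_closure hmulX (hDtcl t)
        (fun h hh => mul_mem (Subgroup.subset_closure (by simp)) hh)
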